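/- Let k be a field of characteristic 2, n ≥ 1, and let A_{+,n} = ( [[0, I_{n+}],[I_{n+}ᵀ, 0]], [[0, I_{n-}],[I_{n-}ᵀ, 0]] ) be the canonical odd-dimensional pair of alternating (2n+1)×(2n+1) matrices. Then for every invertible 2×2 matrix Q = (q_{lk}) over k, the pair A_{+,n} ∘ Q, with components Σ_l q_{l1}A_l and Σ_l q_{l2}A_l where (A₁,A₂) = A_{+,n}, is congruent to A_{+,n} itself. -/

import Mathlib

open Matrix Polynomial

/-- The `n × (n+1)` matrix `I_{n+}` with entries `δ_{ij}`. -/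
def Iplus (k : Type) [Field k] (n : ℕ) : Matrix (Fin n) (Fin (n + 1)) k :=
  fun i j => if (i : ℕ) = (j : ℕ) then 1 else 0

/-- The `n × (n+1)` matrix `I_{n-}` with entries `δ_{i+1,j}`. -/
def Iminus (k : Type) [Field k] (n : ℕ) : Matrix (Fin n) (Fin (n + 1)) k :=
  fun i j => if (i : ℕ) + 1 = (j : ℕ) then 1 else 0

/-! ### Auxiliary definitions and lemmas -/

def GA1 (k : Type) [Field k] (n : ℕ) : Matrix (Fin n ⊕ Fin (n + 1)) (Fin n ⊕ Fin (n + 1)) k :=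
  fromBlocks 0 (Iplus k n) (Iplus k n)ᵀ 0

def GA2 (k : Type) [Field k] (n : ℕ) : Matrix (Fin n ⊕ Fin (n + 1)) (Fin n ⊕ Fin (n + 1)) k :=
  fromBlocks 0 (Iminus k n) (Iminus k n)ᵀ 0

def Good (k : Type) [Field k] (n : ℕ) (Q : Matrix (Fin 2) (Fin 2) k) : Prop :=
  ∃ S : Matrix (Fin n ⊕ Fin (n + 1)) (Fin n ⊕ Fin (n + 1)) k, IsUnit S ∧
    S * (Q 0 0 • GA1 k n + Q 1 0 • GA2 k n) * Sᵀ = GA1 k n ∧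
    S * (Q 0 1 • GA1 k n + Q 1 1 • GA2 k n) * Sᵀ = GA2 k n

variable {k : Type} [Field k] {n : ℕ}

lemma Good.mul {Q Q' : Matrix (Fin 2) (Fin 2) k} (h : Good k n Q) (h' : Good k n Q') :
    Good k n (Q * Q') := by
  obtain ⟨S, hS, h1, h2⟩ := h
  obtain ⟨S', hS', h1', h2'⟩ := h'
  refine ⟨S' * S, hS'.mul hS, ?_, ?_⟩
  · have e : (Q * Q') 0 0 • GA1 k n + (Q * Q') 1 0 • GA2 k n
        = Q' 0 0 • (Q 0 0 • GA1 k n + Q 1 0 • GA2 k n)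
          + Q' 1 0 • (Q 0 1 • GA1 k n + Q 1 1 • GA2 k n) := by
      simp only [Matrix.mul_apply, Fin.sum_univ_two, smul_add, smul_smul, add_smul]
      module
    rw [e, Matrix.transpose_mul]
    have : S' * S * (Q' 0 0 • (Q 0 0 • GA1 k n + Q 1 0 • GA2 k n)
          + Q' 1 0 • (Q 0 1 • GA1 k n + Q 1 1 • GA2 k n)) * (Sᵀ * S'ᵀ)
        = S' * (Q' 0 0 • (S * (Q 0 0 • GA1 k n + Q 1 0 • GA2 k n) * Sᵀ)
          + Q' 1 0 • (S * (Q 0 1 • GA1 k n + Q 1 1 • GA2 k n) * Sᵀ)) * S'ᵀ := by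
      simp only [Matrix.mul_add, Matrix.add_mul, Matrix.mul_smul, Matrix.smul_mul, Matrix.mul_assoc]
    rw [this, h1, h2, h1']
  · have e : (Q * Q') 0 1 • GA1 k n + (Q * Q') 1 1 • GA2 k n
        = Q' 0 1 • (Q 0 0 • GA1 k n + Q 1 0 • GA2 k n)
          + Q' 1 1 • (Q 0 1 • GA1 k n + Q 1 1 • GA2 k n) := by
      simp only [Matrix.mul_apply, Fin.sum_univ_two, smul_add, smul_smul, add_smul]
      module
    rw [e, Matrix.transpose_mul]
    have : S' * S * (Q' 0 1 • (Q 0 0 • GA1 k n + Q 1 0 • GA2 k n)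
          + Q' 1 1 • (Q 0 1 • GA1 k n + Q 1 1 • GA2 k n)) * (Sᵀ * S'ᵀ)
        = S' * (Q' 0 1 • (S * (Q 0 0 • GA1 k n + Q 1 0 • GA2 k n) * Sᵀ)
          + Q' 1 1 • (S * (Q 0 1 • GA1 k n + Q 1 1 • GA2 k n) * Sᵀ)) * S'ᵀ := by
      simp only [Matrix.mul_add, Matrix.add_mul, Matrix.mul_smul, Matrix.smul_mul, Matrix.mul_assoc]
    rw [this, h1, h2, h2']

lemma good_of_blocks (Q : Matrix (Fin 2) (Fin 2) k)
    (P : Matrix (Fin n) (Fin n) k) (R : Matrix (Fin (n+1)) (Fin (n+1)) k)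
    (hP : IsUnit P) (hR : IsUnit R)
    (h1 : P * (Q 0 0 • Iplus k n + Q 1 0 • Iminus k n) * Rᵀ = Iplus k n)
    (h2 : P * (Q 0 1 • Iplus k n + Q 1 1 • Iminus k n) * Rᵀ = Iminus k n) :
    Good k n Q := by
  have hdet : IsUnit (fromBlocks P 0 0 R).det := by
    rw [Matrix.det_fromBlocks_zero₂₁]
    exact ((Matrix.isUnit_iff_isUnit_det P).mp hP).mul ((Matrix.isUnit_iff_isUnit_det R).mp hR)
  refine ⟨fromBlocks P 0 0 R, (Matrix.isUnit_iff_isUnit_det _).mpr hdet, ?_, ?_⟩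
  · have e : Q 0 0 • GA1 k n + Q 1 0 • GA2 k n
        = fromBlocks 0 (Q 0 0 • Iplus k n + Q 1 0 • Iminus k n)
            (Q 0 0 • Iplus k n + Q 1 0 • Iminus k n)ᵀ 0 := by
      ext (i | i) (j | j) <;>
        simp [GA1, GA2, Matrix.smul_apply, Matrix.add_apply]
    rw [e, Matrix.fromBlocks_transpose, Matrix.fromBlocks_multiply, Matrix.fromBlocks_multiply]
    simp only [Matrix.mul_zero, Matrix.zero_mul, zero_add, add_zero, Matrix.transpose_zero]
    rw [GA1, Matrix.fromBlocks_inj]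
    refine ⟨rfl, h1, ?_, rfl⟩
    have := congrArg Matrix.transpose h1
    rw [Matrix.transpose_mul, Matrix.transpose_mul, Matrix.transpose_transpose] at this
    rw [← this, Matrix.mul_assoc]
  · have e : Q 0 1 • GA1 k n + Q 1 1 • GA2 k n
        = fromBlocks 0 (Q 0 1 • Iplus k n + Q 1 1 • Iminus k n)
            (Q 0 1 • Iplus k n + Q 1 1 • Iminus k n)ᵀ 0 := by
      ext (i | i) (j | j) <;>
        simp [GA1, GA2, Matrix.smul_apply, Matrix.add_apply]
    rw [e, Matrix.fromBlocks_transpose, Matrix.fromBlocks_multiply, Matrix.fromBlocks_multiply]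
    simp only [Matrix.mul_zero, Matrix.zero_mul, zero_add, add_zero, Matrix.transpose_zero]
    rw [GA2, Matrix.fromBlocks_inj]
    refine ⟨rfl, h2, ?_, rfl⟩
    have := congrArg Matrix.transpose h2
    rw [Matrix.transpose_mul, Matrix.transpose_mul, Matrix.transpose_transpose] at this
    rw [← this, Matrix.mul_assoc]

/-! ### The swap generator -/

def RevM (k : Type) [Field k] (m : ℕ) : Matrix (Fin m) (Fin m) k :=
  Matrix.of fun i j => if j = i.rev then 1 else 0

lemma RevM_mul_RevM (m : ℕ) : RevM k m * RevM k m = 1 := by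
  ext i j
  simp only [RevM, Matrix.mul_apply, Matrix.of_apply, ite_mul, one_mul, zero_mul,
    Finset.sum_ite_eq', Finset.mem_univ, if_true, Fin.rev_rev]
  rw [Matrix.one_apply]
  exact if_congr eq_comm rfl rfl

lemma isUnit_RevM (m : ℕ) : IsUnit (RevM k m) :=
  (Matrix.isUnit_iff_isUnit_det _).mpr (Matrix.isUnit_det_of_left_inverse (RevM_mul_RevM m))

lemma rev_mul_left (M : Matrix (Fin n) (Fin (n+1)) k) (i : Fin n) (j : Fin (n+1)) :
    (RevM k n * M * (RevM k (n+1))ᵀ) i j = M i.rev j.rev := by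
  simp only [Matrix.mul_apply, RevM, Matrix.transpose_apply, Matrix.of_apply, ite_mul, mul_ite,
    one_mul, zero_mul, mul_one, mul_zero, Finset.sum_ite_eq', Finset.mem_univ, if_true]

lemma swap_cond1 : RevM k n * Iminus k n * (RevM k (n+1))ᵀ = Iplus k n := by
  ext i j
  rw [rev_mul_left]
  show (if (i.rev : ℕ) + 1 = (j.rev : ℕ) then (1:k) else 0) = _
  show _ = (if (i : ℕ) = (j : ℕ) then (1:k) else 0)
  have hi := i.isLt; have hj := j.isLt
  rw [Fin.val_rev, Fin.val_rev]
  exact if_congr (by omega) rfl rfl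

lemma swap_cond2 : RevM k n * Iplus k n * (RevM k (n+1))ᵀ = Iminus k n := by
  ext i j
  rw [rev_mul_left]
  show (if (i.rev : ℕ) = (j.rev : ℕ) then (1:k) else 0) = _
  show _ = (if (i : ℕ) + 1 = (j : ℕ) then (1:k) else 0)
  have hi := i.isLt; have hj := j.isLt
  rw [Fin.val_rev, Fin.val_rev]
  exact if_congr (by omega) rfl rfl

/-! ### The diagonal generator -/

lemma diag_cond (α δ : k) (hα : α ≠ 0) (hδ : δ ≠ 0) :
    (diagonal (fun i : Fin n => α⁻¹ * (α⁻¹ * δ)^(i:ℕ)) * (α • Iplus k n) *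
      (diagonal (fun j : Fin (n+1) => (α * δ⁻¹)^(j:ℕ)))ᵀ = Iplus k n) ∧
    (diagonal (fun i : Fin n => α⁻¹ * (α⁻¹ * δ)^(i:ℕ)) * (δ • Iminus k n) *
      (diagonal (fun j : Fin (n+1) => (α * δ⁻¹)^(j:ℕ)))ᵀ = Iminus k n) := by
  have hh : ∀ m : ℕ, (α⁻¹*δ)^m * (α*δ⁻¹)^m = 1 := by
    intro m
    rw [← mul_pow]
    have : α⁻¹ * δ * (α * δ⁻¹) = 1 := by field_simp
    rw [this, one_pow]
  constructor
  · ext i j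
    rw [Matrix.diagonal_transpose, Matrix.mul_diagonal, Matrix.diagonal_mul]
    show α⁻¹ * (α⁻¹ * δ)^(i:ℕ) * (α * (if (i:ℕ) = (j:ℕ) then (1:k) else 0)) * (α * δ⁻¹)^(j:ℕ)
      = (if (i:ℕ) = (j:ℕ) then (1:k) else 0)
    by_cases h : (i:ℕ) = (j:ℕ)
    · rw [if_pos h, ← h]
      rw [show α⁻¹ * (α⁻¹*δ)^(i:ℕ) * (α*1) * (α*δ⁻¹)^(i:ℕ)
        = α⁻¹ * α * ((α⁻¹*δ)^(i:ℕ) * (α*δ⁻¹)^(i:ℕ)) from by ring, hh, mul_one,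
        inv_mul_cancel₀ hα]
    · simp [h]
  · ext i j
    rw [Matrix.diagonal_transpose, Matrix.mul_diagonal, Matrix.diagonal_mul]
    show α⁻¹ * (α⁻¹ * δ)^(i:ℕ) * (δ * (if (i:ℕ)+1 = (j:ℕ) then (1:k) else 0)) * (α * δ⁻¹)^(j:ℕ)
      = (if (i:ℕ)+1 = (j:ℕ) then (1:k) else 0)
    by_cases h : (i:ℕ)+1 = (j:ℕ)
    · rw [if_pos h, ← h, pow_succ]
      rw [show α⁻¹ * (α⁻¹*δ)^(i:ℕ) * (δ*1) * ((α*δ⁻¹)^(i:ℕ) * (α*δ⁻¹))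
        = (α⁻¹ * δ * (α * δ⁻¹)) * ((α⁻¹*δ)^(i:ℕ) * (α*δ⁻¹)^(i:ℕ)) from by ring, hh, mul_one]
      field_simp
    · simp [h]

lemma isUnit_diag {m : ℕ} (p : Fin m → k) (hp : ∀ i, p i ≠ 0) : IsUnit (diagonal p) := by
  rw [Matrix.isUnit_iff_isUnit_det, Matrix.det_diagonal, isUnit_iff_ne_zero]
  exact Finset.prod_ne_zero_iff.mpr fun i _ => hp i

/-! ### The unipotent generator (Pascal matrices; uses characteristic 2) -/

lemma natDegree_qpow (β : k) (m : ℕ) : ((X + C β) ^ m).natDegree = m := by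
  rw [Polynomial.natDegree_pow, Polynomial.natDegree_X_add_C, mul_one]

lemma comp_qq [CharP k 2] (β : k) : (X + C β).comp (X + C β) = (X : k[X]) := by
  rw [Polynomial.add_comp, Polynomial.X_comp, Polynomial.C_comp, add_assoc, ← Polynomial.C_add,
    CharTwo.add_self_eq_zero, Polynomial.C_0, add_zero]

lemma coeff_sum_comp (β : k) (N : ℕ) (p : k[X]) (hp : p.natDegree < N) (j : ℕ) :
    ∑ l : Fin N, p.coeff l * ((X + C β) ^ (l : ℕ)).coeff j = (p.comp (X + C β)).coeff j := by
  have e : p.comp (X + C β) = ∑ i ∈ Finset.range N, C (p.coeff i) * (X + C β) ^ i := by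
    rw [Polynomial.comp]
    exact Polynomial.eval₂_eq_sum_range' (C : k →+* k[X]) hp _
  rw [e, Polynomial.finset_sum_coeff]
  simp_rw [Polynomial.coeff_C_mul]
  exact Fin.sum_univ_eq_sum_range (fun l => p.coeff l * ((X + C β) ^ l).coeff j) N

noncomputable def PascM (k : Type) [Field k] (m : ℕ) (β : k) : Matrix (Fin m) (Fin m) k :=
  Matrix.of fun i j => ((X + C β) ^ (j : ℕ)).coeff i

lemma PascM_mul_PascM [CharP k 2] (m : ℕ) (β : k) : PascM k m β * PascM k m β = 1 := by
  ext i j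
  rw [Matrix.mul_apply]
  simp_rw [PascM, Matrix.of_apply, mul_comm]
  rw [coeff_sum_comp β m ((X + C β) ^ (j:ℕ)) (by rw [natDegree_qpow]; exact j.isLt) i,
    Polynomial.pow_comp, comp_qq, Polynomial.coeff_X_pow, Matrix.one_apply]
  exact if_congr (by rw [Fin.ext_iff]) rfl rfl

lemma isUnit_PascM [CharP k 2] (m : ℕ) (β : k) : IsUnit (PascM k m β) :=
  (Matrix.isUnit_iff_isUnit_det _).mpr (Matrix.isUnit_det_of_left_inverse (PascM_mul_PascM m β))

noncomputable def UPM (k : Type) [Field k] (n : ℕ) (β : k) : Matrix (Fin n) (Fin n) k :=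
  (PascM k n β)ᵀ

lemma isUnit_UPM [CharP k 2] (β : k) : IsUnit (UPM k n β) := by
  rw [UPM, Matrix.isUnit_iff_isUnit_det, Matrix.det_transpose, ← Matrix.isUnit_iff_isUnit_det]
  exact isUnit_PascM n β

lemma sum_delta1 (f : Fin n → k) (c : ℕ) :
    ∑ i' : Fin n, (if (i' : ℕ) = c then f i' else 0) = if h : c < n then f ⟨c, h⟩ else 0 := by
  by_cases h : c < n
  · rw [dif_pos h]
    have e : ∀ i' : Fin n, (if (i' : ℕ) = c then f i' else 0)
        = if i' = ⟨c, h⟩ then f i' else 0 := fun i' =>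
      if_congr (by simp only [Fin.ext_iff]) rfl rfl
    simp_rw [e]
    rw [Finset.sum_ite_eq' Finset.univ (⟨c, h⟩ : Fin n) f]
    simp
  · rw [dif_neg h]
    apply Finset.sum_eq_zero
    intro i' _
    have := i'.isLt
    rw [if_neg (by omega)]

lemma sum_coeff_delta (p : k[X]) (hdeg : p.natDegree < n) (c : ℕ) (hc : c ≤ n) :
    ∑ i' : Fin n, (if (i' : ℕ) = c then p.coeff i' else 0) = p.coeff c := by
  rw [sum_delta1]
  split
  · rfl
  · rw [Polynomial.coeff_eq_zero_of_natDegree_lt (by omega)]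

lemma sum_delta_shift (p : k[X]) (hdeg : p.natDegree < n) (c : ℕ) (hc : c ≤ n) :
    ∑ i' : Fin n, (if (i' : ℕ) + 1 = c then p.coeff i' else 0) = (X * p).coeff c := by
  match c with
  | 0 =>
    rw [Polynomial.mul_coeff_zero, Polynomial.coeff_X_zero, zero_mul]
    apply Finset.sum_eq_zero
    intro i' _
    rw [if_neg (by omega)]
  | c' + 1 =>
    rw [Polynomial.coeff_X_mul]
    have e : ∀ i' : Fin n, (if (i' : ℕ) + 1 = c' + 1 then p.coeff i' else 0)
        = if (i' : ℕ) = c' then p.coeff i' else 0 := fun i' =>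
      if_congr (by omega) rfl rfl
    simp_rw [e]
    by_cases h : c' < n
    · rw [sum_delta1, dif_pos h]
    · rw [sum_delta1, dif_neg h, Polynomial.coeff_eq_zero_of_natDegree_lt (by omega)]

lemma UPM_mul_Iplus (β : k) :
    UPM k n β * Iplus k n = Matrix.of fun (i : Fin n) (l : Fin (n+1)) =>
      ((X + C β) ^ (i : ℕ)).coeff l := by
  ext i l
  rw [Matrix.mul_apply, Matrix.of_apply]
  have e : ∀ i' : Fin n, UPM k n β i i' * Iplus k n i' l
      = if (i' : ℕ) = (l : ℕ) then ((X + C β) ^ (i : ℕ)).coeff i' else 0 := by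
    intro i'
    simp [UPM, PascM, Iplus, mul_ite]
  simp_rw [e]
  exact sum_coeff_delta _ (by rw [natDegree_qpow]; exact i.isLt) _ (by omega)

lemma UPM_mul_N2 (β : k) :
    UPM k n β * (β • Iplus k n + Iminus k n) = Matrix.of fun (i : Fin n) (l : Fin (n+1)) =>
      ((X + C β) ^ ((i : ℕ) + 1)).coeff l := by
  ext i l
  rw [Matrix.mul_apply, Matrix.of_apply]
  have e : ∀ i' : Fin n, UPM k n β i i' * (β • Iplus k n + Iminus k n) i' l
      = (if (i' : ℕ) = (l : ℕ) then ((X + C β) ^ (i : ℕ)).coeff i' * β else 0)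
        + (if (i' : ℕ) + 1 = (l : ℕ) then ((X + C β) ^ (i : ℕ)).coeff i' else 0) := by
    intro i'
    simp only [UPM, PascM, Matrix.transpose_apply, Matrix.of_apply, Matrix.add_apply,
      Matrix.smul_apply, Iplus, Iminus, smul_eq_mul, mul_add, mul_ite, mul_one, mul_zero]
  simp_rw [e]
  rw [Finset.sum_add_distrib]
  have hdeg : ((X + C β) ^ (i : ℕ)).natDegree < n := by rw [natDegree_qpow]; exact i.isLt
  have e1 : ∑ i' : Fin n, (if (i' : ℕ) = (l : ℕ) then ((X + C β) ^ (i : ℕ)).coeff i' * β else 0)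
      = ((X + C β) ^ (i : ℕ)).coeff l * β := by
    have e' : ∀ i' : Fin n, (if (i' : ℕ) = (l : ℕ) then ((X + C β) ^ (i : ℕ)).coeff i' * β else 0)
        = (if (i' : ℕ) = (l : ℕ) then (((X + C β) ^ (i : ℕ)) * C β).coeff i' else 0) := by
      intro i'; rw [Polynomial.coeff_mul_C]
    simp_rw [e']
    rw [sum_coeff_delta _ (by
      refine lt_of_le_of_lt (Polynomial.natDegree_mul_le) ?_
      simpa using hdeg) _ (by omega), Polynomial.coeff_mul_C]
  rw [e1, sum_delta_shift _ hdeg _ (by omega)]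
  rw [pow_succ, mul_add, Polynomial.coeff_add, Polynomial.coeff_mul_C]
  rw [mul_comm ((X + C β) ^ (i : ℕ)) X]
  ring

lemma upper_cond1 [CharP k 2] (β : k) :
    UPM k n β * Iplus k n * (PascM k (n+1) β)ᵀ = Iplus k n := by
  rw [UPM_mul_Iplus]
  ext i j
  rw [Matrix.mul_apply]
  simp_rw [Matrix.of_apply, Matrix.transpose_apply, PascM, Matrix.of_apply]
  rw [coeff_sum_comp β (n+1) _ (by rw [natDegree_qpow]; omega) j,
    Polynomial.pow_comp, comp_qq, Polynomial.coeff_X_pow]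
  show _ = if (i : ℕ) = (j : ℕ) then (1:k) else 0
  exact if_congr eq_comm rfl rfl

lemma upper_cond2 [CharP k 2] (β : k) :
    UPM k n β * (β • Iplus k n + Iminus k n) * (PascM k (n+1) β)ᵀ = Iminus k n := by
  rw [UPM_mul_N2]
  ext i j
  rw [Matrix.mul_apply]
  simp_rw [Matrix.of_apply, Matrix.transpose_apply, PascM, Matrix.of_apply]
  rw [coeff_sum_comp β (n+1) _ (by rw [natDegree_qpow]; omega) j,
    Polynomial.pow_comp, comp_qq, Polynomial.coeff_X_pow]
  show _ = if (i : ℕ) + 1 = (j : ℕ) then (1:k) else 0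
  exact if_congr eq_comm rfl rfl

/-! ### Goodness of the generators -/

lemma good_swap : Good k n !![(0:k),1;1,0] := by
  apply good_of_blocks _ (RevM k n) (RevM k (n+1)) (isUnit_RevM n) (isUnit_RevM (n+1))
  · simpa using swap_cond1
  · simpa using swap_cond2

lemma good_diag (α δ : k) (hα : α ≠ 0) (hδ : δ ≠ 0) : Good k n !![α,0;0,δ] := by
  obtain ⟨c1, c2⟩ := diag_cond (n := n) α δ hα hδ
  apply good_of_blocks _ (diagonal (fun i : Fin n => α⁻¹ * (α⁻¹ * δ)^(i:ℕ)))
    (diagonal (fun j : Fin (n+1) => (α * δ⁻¹)^(j:ℕ)))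
  · exact isUnit_diag _ fun i => mul_ne_zero (inv_ne_zero hα)
      (pow_ne_zero _ (mul_ne_zero (inv_ne_zero hα) hδ))
  · exact isUnit_diag _ fun j => pow_ne_zero _ (mul_ne_zero hα (inv_ne_zero hδ))
  · simpa using c1
  · simpa using c2

lemma good_upper [CharP k 2] (β : k) : Good k n !![(1:k),β;0,1] := by
  apply good_of_blocks _ (UPM k n β) (PascM k (n+1) β) (isUnit_UPM β) (isUnit_PascM (n+1) β)
  · simpa using upper_cond1 β
  · simpa using upper_cond2 β

lemma good_lower [CharP k 2] (γ : k) : Good k n !![(1:k),0;γ,1] := by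
  have e : (!![(1:k),0;γ,1] : Matrix (Fin 2) (Fin 2) k)
      = !![0,1;1,0] * !![1,γ;0,1] * !![0,1;1,0] := by
    ext i j
    fin_cases i <;> fin_cases j <;> simp [Matrix.mul_apply, Fin.sum_univ_two]
  rw [e]
  exact (good_swap.mul (good_upper γ)).mul good_swap

lemma good_all [CharP k 2] (Q : Matrix (Fin 2) (Fin 2) k) (hQ : IsUnit Q) : Good k n Q := by
  have hdet : Q 0 0 * Q 1 1 - Q 0 1 * Q 1 0 ≠ 0 := by
    rw [Matrix.isUnit_iff_isUnit_det, Matrix.det_fin_two, isUnit_iff_ne_zero] at hQ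
    exact hQ
  by_cases ha : Q 0 0 = 0
  · have hc : Q 1 0 ≠ 0 := fun h => hdet (by rw [ha, h]; ring)
    have hb : Q 0 1 ≠ 0 := fun h => hdet (by rw [ha, h]; ring)
    have e : Q = !![0,1;1,0] * !![Q 1 0, 0; 0, Q 0 1] * !![1, Q 1 1 / Q 1 0; 0, 1] := by
      ext i j
      fin_cases i <;> fin_cases j <;>
        simp [Matrix.mul_apply, Fin.sum_univ_two, ha] <;> field_simp
    rw [e]
    exact (good_swap.mul (good_diag _ _ hc hb)).mul (good_upper _)
  · have he : (Q 0 0 * Q 1 1 - Q 0 1 * Q 1 0) / Q 0 0 ≠ 0 :=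
      div_ne_zero hdet ha
    have e : Q = !![1,0;Q 1 0/Q 0 0,1] * !![Q 0 0,0;0,(Q 0 0*Q 1 1 - Q 0 1*Q 1 0)/Q 0 0]
        * !![1,Q 0 1/Q 0 0;0,1] := by
      ext i j
      fin_cases i <;> fin_cases j <;>
        simp [Matrix.mul_apply, Fin.sum_univ_two] <;> field_simp <;> ring
    rw [e]
    exact ((good_lower _).mul (good_diag _ _ ha he)).mul (good_upper _)

theorem stmt_9 (k : Type) [Field k] [CharP k 2] (n : ℕ) (hn : 1 ≤ n)
    (Q : Matrix (Fin 2) (Fin 2) k) (hQ : IsUnit Q)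
    (A₁ A₂ : Matrix (Fin n ⊕ Fin (n + 1)) (Fin n ⊕ Fin (n + 1)) k)
    (hA₁ : A₁ = fromBlocks 0 (Iplus k n) (Iplus k n)ᵀ 0)
    (hA₂ : A₂ = fromBlocks 0 (Iminus k n) (Iminus k n)ᵀ 0) :
    ∃ S : Matrix (Fin n ⊕ Fin (n + 1)) (Fin n ⊕ Fin (n + 1)) k, IsUnit S ∧
      S * (Q 0 0 • A₁ + Q 1 0 • A₂) * Sᵀ = A₁ ∧
      S * (Q 0 1 • A₁ + Q 1 1 • A₂) * Sᵀ = A₂ := by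
  subst hA₁ hA₂
  obtain ⟨S, hS, h1, h2⟩ := good_all (n := n) Q hQ
  exact ⟨S, hS, h1, h2⟩
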